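/- (Quasi-tiling theorem, Ornstein–Weiss.) Let G be a group generated by a finite symmetric set S and let (F_m) be a Følner exhaustion of G. Then for every ε with 0 < ε < 1 and every n ∈ ℕ there exist L ∈ ℕ, δ > 0, and indices n < n_1 < n_2 < ⋯ < n_s with F_{n_i} ⊆ B_L for all i, such that: every nonempty finite subset Y ⊆ G with |Ω_L(Y)| > (1−δ)|Y| admits a finite family of tiles of the form F_{n_{i(j)}} · x_j (right translates, with i(j) ∈ {1,…,s} and centers x_j ∈ Ω_L(Y), so that each tile is contained in Y) which is ε-disjoint and (1−ε)-covers Y. -/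

import Mathlib

open Pointwise Filter Topology

section Defs

variable {G : Type*} [Group G]

/-- The word ball of radius `k` with respect to the generating set `S`. -/
noncomputable def wball (S : Finset G) (k : ℕ) : Finset G :=
  letI := Classical.decEq G
  (insert (1 : G) S) ^ k

/-- The `k`-neighborhood `B_k(F) = B_k * F` of a finite set `F`. -/
noncomputable def wnbhd (S : Finset G) (k : ℕ) (F : Finset G) : Finset G :=
  letI := Classical.decEq G
  wball S k * F

/-- The `k`-interior `Ω_k(F)` of a finite set `F`. -/
noncomputable def winter (S : Finset G) (k : ℕ) (F : Finset G) : Finset G :=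
  letI := Classical.decEq G
  F.filter fun p => wball S k * {p} ⊆ F

/-- The boundary `∂F` of a finite set `F`. -/
noncomputable def wbdry (S : Finset G) (F : Finset G) : Finset G :=
  letI := Classical.decEq G
  F.filter fun p => ∃ s ∈ S, s * p ∉ F

/-- `S` is a finite symmetric generating set. -/
def IsSymmGen (S : Finset G) : Prop :=
  (∀ s ∈ S, s⁻¹ ∈ S) ∧ Subgroup.closure (S : Set G) = ⊤

/-- A Følner exhaustion of `G`. -/
def IsFolnerExhaustion (S : Finset G) (F : ℕ → Finset G) : Prop :=
  (1 : G) ∈ F 0 ∧ Monotone F ∧ (∀ g : G, ∃ n, g ∈ F n) ∧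
    Filter.Tendsto (fun n => ((wbdry S (F n)).card : ℝ) / ((F n).card : ℝ))
      Filter.atTop (nhds 0)

variable {d : ℕ}

/-- The space of vectors supported in `Fs` such that `A.mulVec f` vanishes on `Fv`. -/
noncomputable def kerOn (A : Matrix (Fin d) (Fin d) (MonoidAlgebra ℂ G))
    (Fs Fv : Finset G) : Submodule ℂ (Fin d → MonoidAlgebra ℂ G) where
  carrier := {f | (∀ i, (f i).coeff.support ⊆ Fs) ∧ ∀ i, ∀ g ∈ Fv, (A.mulVec f i).coeff g = 0}
  zero_mem' := ⟨fun i => by simp, fun i g hg => by simp [Matrix.mulVec_zero]⟩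
  add_mem' := by
    classical
    rintro f g ⟨hf1, hf2⟩ ⟨hg1, hg2⟩
    constructor
    · intro i
      exact (Finsupp.support_add (g₁ := (f i).coeff) (g₂ := (g i).coeff)).trans
        (Finset.union_subset (hf1 i) (hg1 i))
    · intro i x hx
      have h : A.mulVec (f + g) = A.mulVec f + A.mulVec g := Matrix.mulVec_add A f g
      rw [h]
      show ((A.mulVec f i).coeff + (A.mulVec g i).coeff) x = 0
      rw [Finsupp.add_apply, hf2 i x hx, hg2 i x hx, add_zero]
  smul_mem' := by
    classical
    rintro c f ⟨hf1, hf2⟩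
    constructor
    · intro i
      exact (Finsupp.support_smul (b := c) (g := (f i).coeff)).trans (hf1 i)
    · intro i x hx
      have h : A.mulVec (c • f) = c • A.mulVec f := Matrix.mulVec_smul A c f
      rw [h]
      show (c • (A.mulVec f i).coeff) x = 0
      rw [Finsupp.smul_apply, hf2 i x hx, smul_zero]

/-- The space of vectors supported in `Fs` with `A.mulVec f = 0`. -/
noncomputable def kerAll (A : Matrix (Fin d) (Fin d) (MonoidAlgebra ℂ G))
    (Fs : Finset G) : Submodule ℂ (Fin d → MonoidAlgebra ℂ G) where
  carrier := {f | (∀ i, (f i).coeff.support ⊆ Fs) ∧ A.mulVec f = 0}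
  zero_mem' := ⟨fun i => by simp, Matrix.mulVec_zero A⟩
  add_mem' := by
    classical
    rintro f g ⟨hf1, hf2⟩ ⟨hg1, hg2⟩
    exact ⟨fun i => (Finsupp.support_add (g₁ := (f i).coeff) (g₂ := (g i).coeff)).trans
      (Finset.union_subset (hf1 i) (hg1 i)),
      by rw [Matrix.mulVec_add, hf2, hg2, add_zero]⟩
  smul_mem' := by
    classical
    rintro c f ⟨hf1, hf2⟩
    exact ⟨fun i => (Finsupp.support_smul (b := c) (g := (f i).coeff)).trans (hf1 i),
      by rw [Matrix.mulVec_smul, hf2, smul_zero]⟩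

/-- `V(F)`. -/
noncomputable def VSpace (A : Matrix (Fin d) (Fin d) (MonoidAlgebra ℂ G)) (F : Finset G) :
    Submodule ℂ (Fin d → MonoidAlgebra ℂ G) :=
  kerOn A F F

/-- `Z(F)`. -/
noncomputable def ZSpace (S : Finset G) (w : ℕ) (A : Matrix (Fin d) (Fin d) (MonoidAlgebra ℂ G))
    (F : Finset G) : Submodule ℂ (Fin d → MonoidAlgebra ℂ G) :=
  kerOn A (wnbhd S w F) F

/-- `W(F)`. -/
noncomputable def WSpace (S : Finset G) (w : ℕ) (A : Matrix (Fin d) (Fin d) (MonoidAlgebra ℂ G))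
    (F : Finset G) : Submodule ℂ (Fin d → MonoidAlgebra ℂ G) :=
  kerAll A (winter S w F)

/-- `A.mulVec` as a `ℂ`-linear map. -/
noncomputable def mulVecL {R : Type*} [Ring R] [Algebra ℂ R] {d : ℕ}
    (A : Matrix (Fin d) (Fin d) R) : (Fin d → R) →ₗ[ℂ] (Fin d → R) where
  toFun := A.mulVec
  map_add' := Matrix.mulVec_add A
  map_smul' c v := Matrix.mulVec_smul A c v

/-- Coordinatewise restriction to `F` (multiplication by the indicator of `F`). -/
noncomputable def restrictTo (d : ℕ) (F : Finset G) :
    (Fin d → MonoidAlgebra ℂ G) →ₗ[ℂ] (Fin d → MonoidAlgebra ℂ G) :=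
  letI := Classical.decEq G
  { toFun := fun f i => MonoidAlgebra.ofCoeff ((f i).coeff.filter (· ∈ F))
    map_add' := fun f g => by
      funext i
      exact congrArg MonoidAlgebra.ofCoeff Finsupp.filter_add
    map_smul' := fun c f => by
      funext i
      exact congrArg MonoidAlgebra.ofCoeff Finsupp.filter_smul }

end Defs

section Tiling

variable {ι α : Type*}

/-- An `ε`-disjoint family of finite sets. -/
def EpsDisjoint (I : Finset ι) (A : ι → Finset α) (ε : ℝ) : Prop :=
  ∃ Ab : ι → Finset α, (∀ i ∈ I, Ab i ⊆ A i) ∧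
    (∀ i ∈ I, ((1 - ε) * (A i).card : ℝ) ≤ ((Ab i).card : ℝ)) ∧
    ∀ i ∈ I, ∀ j ∈ I, i ≠ j → Disjoint (Ab i) (Ab j)

/-- The family `(A i)_{i ∈ I}` `a`-covers `X`. -/
def CoversFrac (I : Finset ι) (A : ι → Finset α) (X : Finset α) (a : ℝ) : Prop :=
  letI := Classical.decEq α
  (a * X.card : ℝ) ≤ ((X ∩ I.biUnion A).card : ℝ)

/-- The family `(A i)_{i ∈ I}` `δ`-evenly covers `X`. -/
def EvenCovering (I : Finset ι) (A : ι → Finset α) (X : Finset α) (δ : ℝ) : Prop :=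
  letI := Classical.decEq α
  ∃ M : ℕ, 1 ≤ M ∧ (∀ p ∈ X, (I.filter fun i => p ∈ A i).card ≤ M) ∧
    ((1 - δ) * M * X.card : ℝ) ≤ ∑ i ∈ I, ((A i).card : ℝ)

/-- The right translate `H·x`. -/
noncomputable def rtrans [Mul α] (H : Finset α) (x : α) : Finset α :=
  letI := Classical.decEq α
  H.image (· * x)

end Tiling

section Supp

variable {G : Type*} [Group G]

/-- Vectors all of whose coordinates are supported in `F`. -/
noncomputable def suppIn (d : ℕ) (F : Finset G) :
    Submodule ℂ (Fin d → MonoidAlgebra ℂ G) where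
  carrier := {f | ∀ i, (f i).coeff.support ⊆ F}
  zero_mem' := fun i => by simp
  add_mem' := by
    classical
    intro f g hf hg i
    exact (Finsupp.support_add (g₁ := (f i).coeff) (g₂ := (g i).coeff)).trans
      (Finset.union_subset (hf i) (hg i))
  smul_mem' := fun c f hf i => (Finsupp.support_smul (b := c) (g := (f i).coeff)).trans (hf i)

end Supp
section QTAux

open Finset

attribute [local instance 10] Classical.decEq

variable {G : Type*} [Group G]

lemma rtrans_eq (H : Finset G) (x : G) : rtrans H x = H * {x} := by
  unfold rtrans
  exact (Finset.mul_singleton x).symm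

lemma card_mul_singleton' (T : Finset G) (x : G) :
    (T * {x}).card = T.card := by
  rw [Finset.mul_singleton]
  exact Finset.card_image_of_injective _ (mul_left_injective x)

lemma wball_zero (S : Finset G) : wball S 0 = 1 := by
  unfold wball; exact pow_zero _

lemma wball_one' (S : Finset G) : wball S 1 = insert 1 S := by
  unfold wball; exact pow_one _

lemma wball_succ (S : Finset G) (r : ℕ) :
    wball S (r + 1) = insert (1:G) S * wball S r := by
  unfold wball; exact pow_succ' _ _

lemma wball_mono (S : Finset G) {a b : ℕ} (h : a ≤ b) : wball S a ⊆ wball S b := by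
  unfold wball
  exact Finset.pow_subset_pow_right (Finset.mem_insert_self 1 S) h

lemma one_mem_wball (S : Finset G) (k : ℕ) : (1 : G) ∈ wball S k := by
  unfold wball
  exact Finset.one_mem_pow (Finset.mem_insert_self 1 S)

lemma wball_add (S : Finset G) (a b : ℕ) :
    wball S (a + b) = wball S a * wball S b := by
  unfold wball; exact pow_add _ _ _

lemma wball_inv (S : Finset G) (hS : ∀ s ∈ S, s⁻¹ ∈ S) (k : ℕ) :
    (wball S k)⁻¹ = wball S k := by
  have hbase : (insert (1:G) S)⁻¹ = insert (1:G) S := by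
    ext x
    rw [Finset.mem_inv']
    simp only [Finset.mem_insert]
    constructor
    · rintro (h | h)
      · left; rw [← inv_inv x, h]; simp
      · right; have := hS _ h; simpa using this
    · rintro (h | h)
      · left; simp [h]
      · right; exact hS _ h
  unfold wball
  rw [← inv_pow, hbase]

lemma mem_wball_of_gen (S : Finset G) (hS : IsSymmGen S) (g : G) :
    ∃ r, g ∈ wball S r := by
  have hg : g ∈ Subgroup.closure (S : Set G) := by rw [hS.2]; exact Subgroup.mem_top g
  induction hg using Subgroup.closure_induction with
  | mem y hy =>
    refine ⟨1, ?_⟩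
    rw [wball_one']
    exact Finset.mem_insert_of_mem hy
  | one =>
    refine ⟨0, ?_⟩
    rw [wball_zero]
    exact Finset.one_mem_one
  | mul x y _ _ hx hy =>
    obtain ⟨a, ha⟩ := hx
    obtain ⟨b, hb⟩ := hy
    refine ⟨a + b, ?_⟩
    rw [wball_add]
    exact Finset.mul_mem_mul ha hb
  | inv x _ hx =>
    obtain ⟨a, ha⟩ := hx
    refine ⟨a, ?_⟩
    rw [← wball_inv S hS.1 a]
    exact Finset.inv_mem_inv ha

lemma exists_radius (S : Finset G) (hS : IsSymmGen S) (T : Finset G) :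
    ∃ r, T ⊆ wball S r := by
  refine ⟨T.sup (fun g => (mem_wball_of_gen S hS g).choose), fun g hg => ?_⟩
  exact wball_mono S (Finset.le_sup hg) (mem_wball_of_gen S hS g).choose_spec

/-- Path lemma: the `r`-neighborhood minus the set is contained in the
`r`-neighborhood of the boundary. -/
lemma nbhd_sdiff_subset (S : Finset G) (r : ℕ) (Fm : Finset G) :
    (wball S r * Fm) \ Fm ⊆ wball S r * wbdry S Fm := by
  induction r with
  | zero =>
    intro x hx
    rw [Finset.mem_sdiff, wball_zero, one_mul] at hx
    exact absurd hx.1 hx.2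
  | succ r IH =>
    intro x hx
    rw [Finset.mem_sdiff] at hx
    obtain ⟨hx1, hx2⟩ := hx
    rw [wball_succ, mul_assoc] at hx1
    obtain ⟨a, ha, y, hy, rfl⟩ := Finset.mem_mul.1 hx1
    by_cases hyF : y ∈ Fm
    · have ha' : a ∈ S := by
        rcases Finset.mem_insert.1 ha with h | h
        · exact absurd (by rw [h, one_mul]; exact hyF) hx2
        · exact h
      have hybd : y ∈ wbdry S Fm := by
        unfold wbdry
        exact Finset.mem_filter.2 ⟨hyF, a, ha', hx2⟩
      have haW : a ∈ wball S (r + 1) := by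
        refine wball_mono S (Nat.one_le_iff_ne_zero.2 (Nat.succ_ne_zero r)) ?_
        rw [wball_one']
        exact ha
      exact Finset.mul_mem_mul haW hybd
    · have hy' : y ∈ wball S r * wbdry S Fm :=
        IH (Finset.mem_sdiff.2 ⟨hy, hyF⟩)
      obtain ⟨b, hb, z, hz, rfl⟩ := Finset.mem_mul.1 hy'
      rw [← mul_assoc]
      refine Finset.mul_mem_mul ?_ hz
      rw [wball_succ]
      exact Finset.mul_mem_mul ha hb

lemma nbhd_card_le (S : Finset G) (r : ℕ) (Fm : Finset G) :
    ((((wball S r * Fm) \ Fm)).card : ℝ) ≤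
      ((wball S r).card : ℝ) * ((wbdry S Fm).card : ℝ) := by
  calc (((wball S r * Fm) \ Fm).card : ℝ)
      ≤ ((wball S r * wbdry S Fm).card : ℝ) := by
        exact_mod_cast Finset.card_le_card (nbhd_sdiff_subset S r Fm)
    _ ≤ ((wball S r).card : ℝ) * ((wbdry S Fm).card : ℝ) := by
        exact_mod_cast Finset.card_mul_le

end QTAux

section QTGreedy

open Finset

attribute [local instance 10] Classical.decEq

variable {G : Type*} [Group G]

lemma count_overlap (T C W : Finset G) :
    ∑ c ∈ C, ((T * {c}) ∩ W).card ≤ W.card * T.card := by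
  have h1 : ∀ c ∈ C, ((T * {c}) ∩ W).card = ∑ w ∈ W, if w ∈ T * {c} then 1 else 0 := by
    intro c _
    rw [← Finset.card_filter]
    congr 1
    ext w
    simp only [Finset.mem_inter, Finset.mem_filter, and_comm]
  rw [Finset.sum_congr rfl h1, Finset.sum_comm]
  have h2 : ∀ w ∈ W, (∑ c ∈ C, if w ∈ T * {c} then 1 else 0) ≤ T.card := by
    intro w _
    rw [← Finset.card_filter]
    calc (C.filter (fun c => w ∈ T * {c})).card ≤ (T⁻¹ * {w}).card := by
          apply Finset.card_le_card
          intro c hc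
          obtain ⟨t, ht, b, hb, hw⟩ := Finset.mem_mul.1 (Finset.mem_filter.1 hc).2
          rw [Finset.mem_singleton] at hb
          rw [hb] at hw
          have hcw : c = t⁻¹ * w := by rw [← hw]; group
          rw [hcw]
          exact Finset.mul_mem_mul (Finset.inv_mem_inv ht) (Finset.mem_singleton_self w)
      _ = T.card := by rw [card_mul_singleton', Finset.card_inv]
  calc ∑ w ∈ W, ∑ c ∈ C, (if w ∈ T * {c} then 1 else 0)
      ≤ ∑ w ∈ W, T.card := Finset.sum_le_sum h2
    _ = W.card * T.card := by rw [Finset.sum_const, smul_eq_mul]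

lemma greedy (T : Finset G) (hT : (1:G) ∈ T) (ε : ℝ) (hε0 : 0 < ε) (hε1 : ε < 1) :
    ∀ (C U₀ : Finset G),
    ∃ D : Finset G, D ⊆ C ∧ ∃ Ab : G → Finset G,
      (∀ d ∈ D, Ab d ⊆ T * {d}) ∧
      (∀ d ∈ D, Disjoint (Ab d) U₀) ∧
      (∀ d ∈ D, (1-ε) * ((T * {d}).card : ℝ) ≤ ((Ab d).card : ℝ)) ∧
      (∀ d ∈ D, ∀ d' ∈ D, d ≠ d' → Disjoint (Ab d) (Ab d')) ∧
      (∀ c ∈ C, ε * ((T * {c}).card : ℝ) <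
        (((T * {c}) ∩ (U₀ ∪ D.biUnion (fun d => T * {d}))).card : ℝ)) := by
  intro C
  induction C using Finset.strongInduction with
  | _ C IH =>
    intro U₀
    by_cases hA : ∃ c ∈ C, (((T * {c}) ∩ U₀).card : ℝ) ≤ ε * ((T * {c}).card : ℝ)
    · obtain ⟨c, hcC, hc⟩ := hA
      obtain ⟨D', hD'sub, Ab', h1, h2, h3, h4, h5⟩ :=
        IH (C.erase c) (Finset.erase_ssubset hcC) (U₀ ∪ T * {c})
      have hcD' : c ∉ D' := fun h => (Finset.mem_erase.1 (hD'sub h)).1 rfl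
      refine ⟨insert c D', Finset.insert_subset hcC (hD'sub.trans (Finset.erase_subset c C)),
        fun x => if x = c then (T * {c}) \ U₀ else Ab' x, ?_, ?_, ?_, ?_, ?_⟩
      · intro d hd
        dsimp only
        rcases Finset.mem_insert.1 hd with rfl | hd'
        · rw [if_pos rfl]; exact Finset.sdiff_subset
        · rw [if_neg (by rintro rfl; exact hcD' hd')]
          exact h1 d hd'
      · intro d hd
        dsimp only
        rcases Finset.mem_insert.1 hd with rfl | hd'
        · rw [if_pos rfl]; exact Finset.sdiff_disjoint
        · rw [if_neg (by rintro rfl; exact hcD' hd')]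
          exact (h2 d hd').mono_right Finset.subset_union_left
      · intro d hd
        dsimp only
        rcases Finset.mem_insert.1 hd with rfl | hd'
        · rw [if_pos rfl]
          have hsub : (T * {d}) ∩ U₀ ⊆ T * {d} := Finset.inter_subset_left
          have hcard : ((T * {d}) \ U₀).card = (T * {d}).card - ((T * {d}) ∩ U₀).card := by
            rw [← Finset.sdiff_inter_self_left]
            exact Finset.card_sdiff_of_subset hsub
          have hle : ((T * {d}) ∩ U₀).card ≤ (T * {d}).card := Finset.card_le_card hsub
          rw [hcard]
          rw [Nat.cast_sub hle]
          nlinarith [hc]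
        · rw [if_neg (by rintro rfl; exact hcD' hd')]
          exact h3 d hd'
      · intro d hd d' hd' hne
        dsimp only
        rcases Finset.mem_insert.1 hd with rfl | hd1
        · rcases Finset.mem_insert.1 hd' with rfl | hd2
          · exact absurd rfl hne
          · rw [if_pos rfl, if_neg (by rintro rfl; exact hcD' hd2)]
            exact (((h2 d' hd2).mono_right Finset.subset_union_right).mono_right
              Finset.sdiff_subset).symm
        · rcases Finset.mem_insert.1 hd' with rfl | hd2
          · rw [if_pos rfl, if_neg (by rintro rfl; exact hcD' hd1)]
            exact ((h2 d hd1).mono_right Finset.subset_union_right).mono_right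
              Finset.sdiff_subset
          · rw [if_neg (by rintro rfl; exact hcD' hd1),
              if_neg (by rintro rfl; exact hcD' hd2)]
            exact h4 d hd1 d' hd2 hne
      · intro c' hc'
        by_cases hcc : c' = c
        · subst hcc
          have hsub : T * {c'} ⊆ U₀ ∪ (insert c' D').biUnion (fun d => T * {d}) := by
            exact (Finset.subset_biUnion_of_mem (fun d => T * {d}) (Finset.mem_insert_self c' D')).trans
              Finset.subset_union_right
          rw [Finset.inter_eq_left.2 hsub]
          have hpos : (0:ℝ) < ((T * {c'}).card : ℝ) := by
            have hmem : (1:G) * c' ∈ T * {c'} :=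
              Finset.mul_mem_mul hT (Finset.mem_singleton_self c')
            have : 0 < (T * {c'}).card := Finset.card_pos.2 ⟨_, hmem⟩
            exact_mod_cast this
          nlinarith
        · have hc'e : c' ∈ C.erase c := Finset.mem_erase.2 ⟨hcc, hc'⟩
          refine lt_of_lt_of_le (h5 c' hc'e) ?_
          have : (T * {c'}) ∩ ((U₀ ∪ T * {c}) ∪ D'.biUnion (fun d => T * {d})) ⊆
              (T * {c'}) ∩ (U₀ ∪ (insert c D').biUnion (fun d => T * {d})) := by
            refine Finset.inter_subset_inter (Finset.Subset.refl _) ?_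
            intro x hx
            simp only [Finset.mem_union, Finset.mem_biUnion, Finset.mem_insert] at hx ⊢
            rcases hx with (hx | hx) | ⟨d, hd, hx⟩
            · exact Or.inl hx
            · exact Or.inr ⟨c, Or.inl rfl, hx⟩
            · exact Or.inr ⟨d, Or.inr hd, hx⟩
          exact_mod_cast Finset.card_le_card this
    · push_neg at hA
      refine ⟨∅, Finset.empty_subset _, fun _ => ∅, by simp, by simp, by simp, by simp, ?_⟩
      intro c hc
      have := hA c hc
      simpa using this

lemma greedy_cover (T : Finset G) (hT : (1:G) ∈ T) (ε : ℝ) (hε0 : 0 < ε) (hε1 : ε < 1)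
    (C U₀ : Finset G) (hdisj : ∀ c ∈ C, Disjoint (T * {c}) U₀) :
    ∃ D : Finset G, D ⊆ C ∧ ∃ Ab : G → Finset G,
      (∀ d ∈ D, Ab d ⊆ T * {d}) ∧
      (∀ d ∈ D, Disjoint (Ab d) U₀) ∧
      (∀ d ∈ D, (1-ε) * ((T * {d}).card : ℝ) ≤ ((Ab d).card : ℝ)) ∧
      (∀ d ∈ D, ∀ d' ∈ D, d ≠ d' → Disjoint (Ab d) (Ab d')) ∧
      ε * (C.card : ℝ) ≤ ((D.biUnion (fun d => T * {d})).card : ℝ) := by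
  obtain ⟨D, hD, Ab, h1, h2, h3, h4, h5⟩ := greedy T hT ε hε0 hε1 C U₀
  refine ⟨D, hD, Ab, h1, h2, h3, h4, ?_⟩
  set W := D.biUnion (fun d => T * {d}) with hW
  have key : ∀ c ∈ C, ε * (T.card : ℝ) < (((T * {c}) ∩ W).card : ℝ) := by
    intro c hc
    have h := h5 c hc
    rw [card_mul_singleton'] at h
    have he : (T * {c}) ∩ (U₀ ∪ W) = (T * {c}) ∩ W := by
      rw [Finset.inter_union_distrib_left,
        Finset.disjoint_iff_inter_eq_empty.1 (hdisj c hc), Finset.empty_union]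
    rwa [he] at h
  have hTpos : (0:ℝ) < (T.card : ℝ) := by
    exact_mod_cast Finset.card_pos.2 ⟨1, hT⟩
  have hsum : ε * (T.card : ℝ) * (C.card : ℝ) ≤ (W.card : ℝ) * (T.card : ℝ) := by
    calc ε * (T.card : ℝ) * (C.card : ℝ) = ∑ _c ∈ C, ε * (T.card : ℝ) := by
          rw [Finset.sum_const, nsmul_eq_mul]; ring
      _ ≤ ∑ c ∈ C, (((T * {c}) ∩ W).card : ℝ) :=
          Finset.sum_le_sum (fun c hc => le_of_lt (key c hc))
      _ ≤ (W.card : ℝ) * (T.card : ℝ) := by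
          exact_mod_cast count_overlap T C W
  nlinarith

lemma multi (ε : ℝ) (hε0 : 0 < ε) (hε2 : ε ≤ 1/2)
    (k : ℕ) (T : Fin k → Finset G) (hT1 : ∀ i, (1:G) ∈ T i)
    (Y C₀ : Finset G) (hC₀Y : C₀ ⊆ Y)
    (hC₀ : ∀ c ∈ C₀, ∀ i, T i * {c} ⊆ Y)
    (hinv : ∀ i j : Fin k, (i:ℕ) < (j:ℕ) →
      ((((T i)⁻¹ * T j) \ T j).card : ℝ) ≤ ε/8 * ((T j).card : ℝ))
    (hδ : ((Y \ C₀).card : ℝ) ≤ ε/8 * (Y.card : ℝ)) :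
    ∀ (j : ℕ), j ≤ k → ∀ (P : Finset (Fin k × G)) (Ab : Fin k × G → Finset G),
      (∀ p ∈ P, j ≤ (p.1 : ℕ)) →
      (∀ p ∈ P, Ab p ⊆ T p.1 * {p.2}) →
      (∀ p ∈ P, (1-ε) * ((T p.1 * {p.2}).card : ℝ) ≤ ((Ab p).card : ℝ)) →
      (∀ p ∈ P, ∀ q ∈ P, p ≠ q → Disjoint (Ab p) (Ab q)) →
      (∀ p ∈ P, p.2 ∈ C₀) →
      ∃ (P' : Finset (Fin k × G)) (Ab' : Fin k × G → Finset G),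
        P ⊆ P' ∧
        (∀ p ∈ P', Ab' p ⊆ T p.1 * {p.2}) ∧
        (∀ p ∈ P', (1-ε) * ((T p.1 * {p.2}).card : ℝ) ≤ ((Ab' p).card : ℝ)) ∧
        (∀ p ∈ P', ∀ q ∈ P', p ≠ q → Disjoint (Ab' p) (Ab' q)) ∧
        (∀ p ∈ P', p.2 ∈ C₀) ∧
        ((Y \ P'.biUnion (fun p => T p.1 * {p.2})).card : ℝ) ≤
          max (ε * (Y.card : ℝ))
            ((1-ε/2)^j * ((Y \ P.biUnion (fun p => T p.1 * {p.2})).card : ℝ)) := by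
  have hε1 : ε < 1 := by linarith
  intro j
  induction j with
  | zero =>
    intro _ P Ab h1 h2 h3 h4 h5
    refine ⟨P, Ab, Finset.Subset.refl _, h2, h3, h4, h5, ?_⟩
    rw [pow_zero, one_mul]
    exact le_max_right _ _
  | succ j IH =>
    intro hjk P Ab hsh hAb1 hAb2 hAb3 hctr
    have hjk' : j ≤ k := Nat.le_of_succ_le hjk
    set U := P.biUnion (fun p => T p.1 * {p.2}) with hU
    set Z := Y \ U with hZdef
    by_cases hZsmall : (Z.card : ℝ) ≤ ε * (Y.card : ℝ)
    · exact ⟨P, Ab, Finset.Subset.refl _, hAb1, hAb2, hAb3, hctr,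
        le_trans hZsmall (le_max_left _ _)⟩
    push_neg at hZsmall
    have hjlt : j < k := lt_of_lt_of_le (Nat.lt_succ_self j) hjk
    set i : Fin k := ⟨j, hjlt⟩ with hidef
    have hij : (i : ℕ) = j := rfl
    have htileY : ∀ p ∈ P, T p.1 * {p.2} ⊆ Y := fun p hp => hC₀ p.2 (hctr p hp) p.1
    have hUY : U ⊆ Y := by
      intro x hx
      obtain ⟨p, hp, hxp⟩ := Finset.mem_biUnion.1 hx
      exact htileY p hp hxp
    have hYpos : (0:ℝ) ≤ (Y.card : ℝ) := Nat.cast_nonneg _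
    -- total size of existing tiles is at most 2|Y|
    have htilesum : ∑ p ∈ P, ((T p.1 * {p.2}).card : ℝ) ≤ 2 * (Y.card : ℝ) := by
      have hAbU : P.biUnion Ab ⊆ Y := by
        intro x hx
        obtain ⟨p, hp, hxp⟩ := Finset.mem_biUnion.1 hx
        exact htileY p hp (hAb1 p hp hxp)
      have hcardAb : ∑ p ∈ P, ((Ab p).card : ℝ) ≤ (Y.card : ℝ) := by
        have hbi := Finset.card_biUnion hAb3
        have hle : (P.biUnion Ab).card ≤ Y.card := Finset.card_le_card hAbU
        rw [hbi] at hle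
        exact_mod_cast hle
      have hstep : ∑ p ∈ P, ((T p.1 * {p.2}).card : ℝ) ≤
          ∑ p ∈ P, 2 * ((Ab p).card : ℝ) := by
        refine Finset.sum_le_sum (fun p hp => ?_)
        have h := hAb2 p hp
        have hx0 : (0:ℝ) ≤ ((T p.1 * {p.2}).card : ℝ) := Nat.cast_nonneg _
        nlinarith
      rw [← Finset.mul_sum] at hstep
      linarith
    -- the set of admissible centers
    set C₁ := (C₀ ∩ Z).filter (fun c => Disjoint (T i * {c}) U) with hC₁def
    have hC₁sub : C₁ ⊆ C₀ := fun c hc =>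
      (Finset.mem_inter.1 (Finset.mem_filter.1 hc).1).1
    -- lower bound on |C₁|
    set Bad := P.biUnion (fun p => ((T i)⁻¹ * (T p.1 * {p.2})) \ (T p.1 * {p.2})) with hBad
    have hsubC₁ : (C₀ ∩ Z) \ Bad ⊆ C₁ := by
      intro c hc
      rw [Finset.mem_sdiff] at hc
      obtain ⟨hc1, hc2⟩ := hc
      rw [hC₁def, Finset.mem_filter]
      refine ⟨hc1, ?_⟩
      rw [Finset.disjoint_left]
      intro x hx hxU
      obtain ⟨p, hp, hxp⟩ := Finset.mem_biUnion.1 hxU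
      obtain ⟨t, ht, b, hb, hxe⟩ := Finset.mem_mul.1 hx
      rw [Finset.mem_singleton] at hb
      rw [hb] at hxe
      have hcinv : c = t⁻¹ * x := by rw [← hxe]; group
      have hcmem : c ∈ (T i)⁻¹ * (T p.1 * {p.2}) := by
        rw [hcinv]
        exact Finset.mul_mem_mul (Finset.inv_mem_inv ht) hxp
      have hcnot : c ∉ T p.1 * {p.2} := by
        intro hmem
        have : c ∈ U := Finset.mem_biUnion.2 ⟨p, hp, hmem⟩
        exact (Finset.mem_sdiff.1 (Finset.mem_inter.1 hc1).2).2 this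
      exact hc2 (Finset.mem_biUnion.2 ⟨p, hp, Finset.mem_sdiff.2 ⟨hcmem, hcnot⟩⟩)
    have hBadcard : ((Bad.card : ℝ)) ≤ ε/4 * (Y.card : ℝ) := by
      have h1 : (Bad.card : ℝ) ≤
          ∑ p ∈ P, ((((T i)⁻¹ * (T p.1 * {p.2})) \ (T p.1 * {p.2})).card : ℝ) := by
        exact_mod_cast Finset.card_biUnion_le
      have h2 : ∀ p ∈ P, ((((T i)⁻¹ * (T p.1 * {p.2})) \ (T p.1 * {p.2})).card : ℝ) ≤
          ε/8 * ((T p.1 * {p.2}).card : ℝ) := by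
        intro p hp
        have h1 : ∀ A B : Finset G, (A * {p.2}) \ (B * {p.2}) = (A \ B) * {p.2} := by
          intro A B
          rw [Finset.mul_singleton, Finset.mul_singleton, Finset.mul_singleton]
          exact (Finset.image_sdiff _ _ (mul_left_injective p.2)).symm
        have heq : ((T i)⁻¹ * (T p.1 * {p.2})) \ (T p.1 * {p.2}) =
            (((T i)⁻¹ * T p.1) \ T p.1) * {p.2} := by
          rw [← mul_assoc, h1]
        rw [heq, card_mul_singleton', card_mul_singleton']
        refine hinv i p.1 ?_
        rw [hij]
        exact lt_of_lt_of_le (Nat.lt_succ_self j) (hsh p hp)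
      calc (Bad.card : ℝ) ≤ ∑ p ∈ P, ε/8 * ((T p.1 * {p.2}).card : ℝ) :=
            h1.trans (Finset.sum_le_sum h2)
        _ = ε/8 * ∑ p ∈ P, ((T p.1 * {p.2}).card : ℝ) := by rw [Finset.mul_sum]
        _ ≤ ε/8 * (2 * (Y.card : ℝ)) := by
            refine mul_le_mul_of_nonneg_left htilesum (by linarith)
        _ = ε/4 * (Y.card : ℝ) := by ring
    have hZC₀ : ((Z.card : ℝ)) ≤ ((C₀ ∩ Z).card : ℝ) + ε/8 * (Y.card : ℝ) := by
      have hsub : Z ⊆ (Y \ C₀) ∪ (C₀ ∩ Z) := by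
        intro c hc
        have hcY : c ∈ Y := (Finset.mem_sdiff.1 hc).1
        by_cases hcC : c ∈ C₀
        · exact Finset.mem_union_right _ (Finset.mem_inter.2 ⟨hcC, hc⟩)
        · exact Finset.mem_union_left _ (Finset.mem_sdiff.2 ⟨hcY, hcC⟩)
      have := Finset.card_le_card hsub
      have hun := Finset.card_union_le (Y \ C₀) (C₀ ∩ Z)
      have hcast : (Z.card : ℝ) ≤ ((Y \ C₀).card : ℝ) + ((C₀ ∩ Z).card : ℝ) := by
        exact_mod_cast le_trans this hun
      linarith
    have hC₁card : (Z.card : ℝ) ≤ 2 * (C₁.card : ℝ) := by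
      have h1 : ((C₀ ∩ Z).card : ℝ) ≤ (C₁.card : ℝ) + (Bad.card : ℝ) := by
        have hsub : C₀ ∩ Z ⊆ C₁ ∪ Bad := by
          intro c hc
          by_cases hcB : c ∈ Bad
          · exact Finset.mem_union_right _ hcB
          · exact Finset.mem_union_left _ (hsubC₁ (Finset.mem_sdiff.2 ⟨hc, hcB⟩))
        have := le_trans (Finset.card_le_card hsub) (Finset.card_union_le C₁ Bad)
        exact_mod_cast this
      have hYZ : (Y.card : ℝ) ≤ (Z.card : ℝ) / ε := by
        rw [le_div_iff₀ hε0]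
        nlinarith
      have h38 : ε/8 * (Y.card : ℝ) + ε/4 * (Y.card : ℝ) ≤ 3/8 * (Z.card : ℝ) := by
        have : ε/8 * (Y.card : ℝ) + ε/4 * (Y.card : ℝ) = 3*ε/8 * (Y.card : ℝ) := by ring
        rw [this]
        have := mul_le_mul_of_nonneg_left hYZ (by linarith : (0:ℝ) ≤ 3*ε/8)
        calc 3*ε/8 * (Y.card : ℝ) ≤ 3*ε/8 * ((Z.card : ℝ) / ε) := this
          _ = 3/8 * (Z.card : ℝ) := by field_simp
      linarith
    -- run the greedy construction at scale i
    have hdisjC₁ : ∀ c ∈ C₁, Disjoint (T i * {c}) U :=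
      fun c hc => (Finset.mem_filter.1 hc).2
    obtain ⟨D, hDC₁, AbG, g1, g2, g3, g4, gcov⟩ :=
      greedy_cover (T i) (hT1 i) ε hε0 hε1 C₁ U hdisjC₁
    set W := D.biUnion (fun d => T i * {d}) with hWdefX
    have hWZ : W ⊆ Z := by
      intro x hx
      obtain ⟨d, hd, hxd⟩ := Finset.mem_biUnion.1 hx
      have hdC₀ : d ∈ C₀ := hC₁sub (hDC₁ hd)
      refine Finset.mem_sdiff.2 ⟨hC₀ d hdC₀ i hxd, ?_⟩
      exact Finset.disjoint_left.1 (hdisjC₁ d (hDC₁ hd)) hxd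
    have hWcard : ε/2 * (Z.card : ℝ) ≤ (W.card : ℝ) := by
      have := mul_le_mul_of_nonneg_left hC₁card (by linarith : (0:ℝ) ≤ ε/2)
      calc ε/2 * (Z.card : ℝ) ≤ ε/2 * (2 * (C₁.card : ℝ)) := this
        _ = ε * (C₁.card : ℝ) := by ring
        _ ≤ (W.card : ℝ) := gcov
    -- the new tile family
    set P' := P ∪ D.image (fun d => (i, d)) with hP'def
    have hPsub : P ⊆ P' := Finset.subset_union_left
    have hcase : ∀ p ∈ P', (p ∈ P ∧ p.1 ≠ i) ∨ (p.1 = i ∧ p.2 ∈ D ∧ p ∉ P) := by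
      intro p hp
      have hnotP : ∀ q : Fin k × G, q ∈ P → q.1 ≠ i := by
        intro q hq hqi
        have := hsh q hq
        rw [hqi, hij] at this
        omega
      rcases Finset.mem_union.1 hp with h | h
      · exact Or.inl ⟨h, hnotP p h⟩
      · obtain ⟨d, hd, hde⟩ := Finset.mem_image.1 h
        have h1 : p.1 = i := by rw [← hde]
        have h2 : p.2 = d := by rw [← hde]
        refine Or.inr ⟨h1, h2 ▸ hd, fun hpP => hnotP p hpP h1⟩
    set Ab' : Fin k × G → Finset G := fun p => if p.1 = i then AbG p.2 else Ab p
      with hAb'def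
    have hAb'new : ∀ p : Fin k × G, p.1 = i → Ab' p = AbG p.2 := by
      intro p hp
      rw [hAb'def]
      dsimp only
      rw [if_pos hp]
    have hAb'old : ∀ p : Fin k × G, p.1 ≠ i → Ab' p = Ab p := by
      intro p hp
      rw [hAb'def]
      dsimp only
      rw [if_neg hp]
    have hAbGU : ∀ d ∈ D, ∀ q ∈ P, Disjoint (AbG d) (Ab q) := by
      intro d hd q hq
      refine (g2 d hd).mono_right ?_
      exact (hAb1 q hq).trans (Finset.subset_biUnion_of_mem (fun p => T p.1 * {p.2}) hq)
    have hNew1 : ∀ p ∈ P', Ab' p ⊆ T p.1 * {p.2} := by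
      intro p hp
      rcases hcase p hp with ⟨hpP, hpi⟩ | ⟨hpi, hpD, _⟩
      · rw [hAb'old p hpi]; exact hAb1 p hpP
      · rw [hAb'new p hpi, hpi]
        exact g1 p.2 hpD
    have hNew2 : ∀ p ∈ P', (1-ε) * ((T p.1 * {p.2}).card : ℝ) ≤ ((Ab' p).card : ℝ) := by
      intro p hp
      rcases hcase p hp with ⟨hpP, hpi⟩ | ⟨hpi, hpD, _⟩
      · rw [hAb'old p hpi]; exact hAb2 p hpP
      · rw [hAb'new p hpi, hpi]
        exact g3 p.2 hpD
    have hNew3 : ∀ p ∈ P', ∀ q ∈ P', p ≠ q → Disjoint (Ab' p) (Ab' q) := by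
      intro p hp q hq hne
      rcases hcase p hp with ⟨hpP, hpi⟩ | ⟨hpi, hpD, hpnP⟩
      · rcases hcase q hq with ⟨hqP, hqi⟩ | ⟨hqi, hqD, _⟩
        · rw [hAb'old p hpi, hAb'old q hqi]
          exact hAb3 p hpP q hqP hne
        · rw [hAb'old p hpi, hAb'new q hqi]
          exact (hAbGU q.2 hqD p hpP).symm
      · rcases hcase q hq with ⟨hqP, hqi⟩ | ⟨hqi, hqD, _⟩
        · rw [hAb'new p hpi, hAb'old q hqi]
          exact hAbGU p.2 hpD q hqP
        · rw [hAb'new p hpi, hAb'new q hqi]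
          refine g4 p.2 hpD q.2 hqD ?_
          intro h2eq
          exact hne (Prod.ext (hpi.trans hqi.symm) h2eq)
    have hNew4 : ∀ p ∈ P', p.2 ∈ C₀ := by
      intro p hp
      rcases hcase p hp with ⟨hpP, _⟩ | ⟨_, hpD, _⟩
      · exact hctr p hpP
      · exact hC₁sub (hDC₁ hpD)
    have hshP' : ∀ p ∈ P', j ≤ (p.1 : ℕ) := by
      intro p hp
      rcases hcase p hp with ⟨hpP, _⟩ | ⟨hpi, _, _⟩
      · exact le_trans (Nat.le_succ j) (hsh p hpP)
      · rw [hpi, hij]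
    -- the union of the new family
    have hUP' : P'.biUnion (fun p => T p.1 * {p.2}) = U ∪ W := by
      apply Finset.Subset.antisymm
      · intro x hx
        obtain ⟨p, hp, hxp⟩ := Finset.mem_biUnion.1 hx
        rcases Finset.mem_union.1 hp with h | h
        · exact Finset.mem_union_left _ (Finset.mem_biUnion.2 ⟨p, h, hxp⟩)
        · obtain ⟨d, hd, hde⟩ := Finset.mem_image.1 h
          refine Finset.mem_union_right _ (Finset.mem_biUnion.2 ⟨d, hd, ?_⟩)
          rw [← hde] at hxp
          exact hxp
      · intro x hx
        rcases Finset.mem_union.1 hx with h | h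
        · obtain ⟨p, hp, hxp⟩ := Finset.mem_biUnion.1 h
          exact Finset.mem_biUnion.2 ⟨p, hPsub hp, hxp⟩
        · obtain ⟨d, hd, hxd⟩ := Finset.mem_biUnion.1 h
          refine Finset.mem_biUnion.2 ⟨(i, d), ?_, hxd⟩
          exact Finset.mem_union_right _ (Finset.mem_image.2 ⟨d, hd, rfl⟩)
    -- remainder estimate
    have hZ'card : ((Y \ P'.biUnion (fun p => T p.1 * {p.2})).card : ℝ) ≤
        (1 - ε/2) * (Z.card : ℝ) := by
      have heq : Y \ P'.biUnion (fun p => T p.1 * {p.2}) = Z \ W := by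
        rw [hUP', hZdef]
        ext x
        simp only [Finset.mem_sdiff, Finset.mem_union]
        tauto
      rw [heq]
      have hcs : (Z \ W).card = Z.card - W.card := Finset.card_sdiff_of_subset hWZ
      have hWle : W.card ≤ Z.card := Finset.card_le_card hWZ
      rw [hcs, Nat.cast_sub hWle]
      linarith
    -- apply the induction hypothesis to the augmented family
    obtain ⟨P'', Ab'', hsub'', hA1, hA2, hA3, hA5, hrem⟩ :=
      IH hjk' P' Ab' hshP' hNew1 hNew2 hNew3 hNew4
    refine ⟨P'', Ab'', hPsub.trans hsub'', hA1, hA2, hA3, hA5, ?_⟩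
    refine hrem.trans (max_le_max (le_refl _) ?_)
    have hpw : (0:ℝ) ≤ (1-ε/2)^j := by
      apply pow_nonneg
      linarith
    calc (1-ε/2)^j * ((Y \ P'.biUnion (fun p => T p.1 * {p.2})).card : ℝ)
        ≤ (1-ε/2)^j * ((1 - ε/2) * (Z.card : ℝ)) :=
          mul_le_mul_of_nonneg_left hZ'card hpw
      _ = (1-ε/2)^(j+1) * (Z.card : ℝ) := by rw [pow_succ]; ring

end QTGreedy

section QTScales

open Finset

attribute [local instance 10] Classical.decEq

variable {G : Type*} [Group G]

lemma folner_pick (S : Finset G) (Fse : ℕ → Finset G) (hF : IsFolnerExhaustion S Fse)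
    (c : ℝ) (hc : 0 < c) (N : ℕ) :
    ∃ m, N < m ∧ ((wbdry S (Fse m)).card : ℝ) ≤ c * ((Fse m).card : ℝ) := by
  obtain ⟨a, ha⟩ := Filter.eventually_atTop.1 (hF.2.2.2.eventually (gt_mem_nhds hc))
  refine ⟨max (N+1) a, lt_of_lt_of_le (Nat.lt_succ_self N) (le_max_left _ _), ?_⟩
  have h := ha _ (le_max_right (N+1) a)
  have hne : (Fse (max (N+1) a)).Nonempty := ⟨1, hF.2.1 (Nat.zero_le _) hF.1⟩
  have hpos : (0:ℝ) < ((Fse (max (N+1) a)).card : ℝ) := by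
    exact_mod_cast Finset.card_pos.2 hne
  rw [div_lt_iff₀ hpos] at h
  linarith

lemma exists_scales (S : Finset G) (hS : IsSymmGen S) (Fse : ℕ → Finset G)
    (hF : IsFolnerExhaustion S Fse) (η : ℝ) (hη : 0 < η) (n k : ℕ) :
    ∃ (q : ℕ → ℕ) (L : ℕ), StrictMono q ∧ (∀ j, n < q j) ∧
      (∀ j, j < k → Fse (q j) ⊆ wball S L) ∧
      (∀ a b : ℕ, a < b →
        ((((Fse (q a))⁻¹ * Fse (q b)) \ Fse (q b)).card : ℝ) ≤ η * ((Fse (q b)).card : ℝ)) := by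
  have hstep : ∀ p r : ℕ, ∃ m : ℕ, ∃ rr : ℕ, p < m ∧ r ≤ rr ∧ Fse m ⊆ wball S rr ∧
      (((wball S r * Fse m) \ Fse m).card : ℝ) ≤ η * ((Fse m).card : ℝ) := by
    intro p r
    have hBpos : (0:ℝ) < ((wball S r).card : ℝ) := by
      exact_mod_cast Finset.card_pos.2 ⟨1, one_mem_wball S r⟩
    obtain ⟨m, hm1, hm2⟩ := folner_pick S Fse hF (η / ((wball S r).card : ℝ))
      (div_pos hη hBpos) p
    obtain ⟨r₀, hr₀⟩ := exists_radius S hS (Fse m)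
    refine ⟨m, max r r₀, hm1, le_max_left _ _, hr₀.trans (wball_mono S (le_max_right r r₀)), ?_⟩
    calc (((wball S r * Fse m) \ Fse m).card : ℝ)
        ≤ ((wball S r).card : ℝ) * ((wbdry S (Fse m)).card : ℝ) := nbhd_card_le S r (Fse m)
      _ ≤ ((wball S r).card : ℝ) * (η / ((wball S r).card : ℝ) * ((Fse m).card : ℝ)) :=
          mul_le_mul_of_nonneg_left hm2 (le_of_lt hBpos)
      _ = η * ((Fse m).card : ℝ) := by field_simp
  let Q : ℕ → ℕ × ℕ := fun j => Nat.rec (n, 0)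
    (fun _ pr => ⟨(hstep pr.1 pr.2).choose, (hstep pr.1 pr.2).choose_spec.choose⟩) j
  have hQs : ∀ j : ℕ, (Q j).1 < (Q (j+1)).1 ∧ (Q j).2 ≤ (Q (j+1)).2 ∧
      Fse ((Q (j+1)).1) ⊆ wball S ((Q (j+1)).2) ∧
      (((wball S ((Q j).2) * Fse ((Q (j+1)).1)) \ Fse ((Q (j+1)).1)).card : ℝ) ≤
        η * ((Fse ((Q (j+1)).1)).card : ℝ) := by
    intro j
    exact (hstep (Q j).1 (Q j).2).choose_spec.choose_spec
  have hmono1 : StrictMono (fun j => (Q j).1) :=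
    strictMono_nat_of_lt_succ (fun j => (hQs j).1)
  have hmono2 : Monotone (fun j => (Q j).2) :=
    monotone_nat_of_le_succ (fun j => (hQs j).2.1)
  refine ⟨fun j => (Q (j+1)).1, (Q k).2, ?_, ?_, ?_, ?_⟩
  · intro a b hab
    exact hmono1 (Nat.succ_lt_succ hab)
  · intro j
    have : (Q 0).1 < (Q (j+1)).1 := hmono1 (Nat.succ_pos j)
    exact this
  · intro j hj
    refine ((hQs j).2.2.1).trans (wball_mono S ?_)
    exact hmono2 hj
  · intro a b hab
    have hsub : ((Fse ((Q (a+1)).1))⁻¹ * Fse ((Q (b+1)).1)) \ Fse ((Q (b+1)).1) ⊆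
        ((wball S ((Q b).2) * Fse ((Q (b+1)).1)) \ Fse ((Q (b+1)).1)) := by
      refine Finset.sdiff_subset_sdiff ?_ (Finset.Subset.refl _)
      refine Finset.mul_subset_mul_right ?_
      have h1 : (Fse ((Q (a+1)).1))⁻¹ ⊆ (wball S ((Q (a+1)).2))⁻¹ :=
        Finset.inv_subset_inv ((hQs a).2.2.1)
      rw [wball_inv S hS.1] at h1
      exact h1.trans (wball_mono S (hmono2 hab))
    calc ((((Fse ((Q (a+1)).1))⁻¹ * Fse ((Q (b+1)).1)) \ Fse ((Q (b+1)).1)).card : ℝ)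
        ≤ (((wball S ((Q b).2) * Fse ((Q (b+1)).1)) \ Fse ((Q (b+1)).1)).card : ℝ) := by
          exact_mod_cast Finset.card_le_card hsub
      _ ≤ η * ((Fse ((Q (b+1)).1)).card : ℝ) := (hQs b).2.2.2

end QTScales

section QTMain

open Finset

attribute [local instance 10] Classical.decEq

theorem quasi_tiling_half {G : Type*} [Group G] (S : Finset G) (hS : IsSymmGen S)
    (F : ℕ → Finset G) (hF : IsFolnerExhaustion S F)
    (ε : ℝ) (hε0 : 0 < ε) (hε2 : ε ≤ 1/2) (n : ℕ) :
    ∃ (L : ℕ) (δ : ℝ) (s : ℕ) (nidx : Fin s → ℕ), 0 < δ ∧ StrictMono nidx ∧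
      (∀ i, n < nidx i) ∧ (∀ i, F (nidx i) ⊆ wball S L) ∧
      ∀ Y : Finset G, Y.Nonempty → ((1 - δ) * (Y.card : ℝ) < ((winter S L Y).card : ℝ)) →
        ∃ (m : ℕ) (t : Fin m → Fin s) (ctr : Fin m → G),
          (∀ j, ctr j ∈ winter S L Y) ∧
          (∀ j, rtrans (F (nidx (t j))) (ctr j) ⊆ Y) ∧
          EpsDisjoint (Finset.univ : Finset (Fin m))
            (fun j => rtrans (F (nidx (t j))) (ctr j)) ε ∧
          CoversFrac (Finset.univ : Finset (Fin m))
            (fun j => rtrans (F (nidx (t j))) (ctr j)) Y (1 - ε) := by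
  have hε1 : ε < 1 := by linarith
  obtain ⟨k₀, hk₀⟩ := Filter.eventually_atTop.1
    ((tendsto_pow_atTop_nhds_zero_of_lt_one (by linarith : (0:ℝ) ≤ 1 - ε/2)
      (by linarith : 1 - ε/2 < 1)).eventually (gt_mem_nhds hε0))
  set k := max k₀ 1 with hkdef
  have hk : (1-ε/2)^k < ε := hk₀ k (le_max_left _ _)
  obtain ⟨q, L, hqmono, hqn, hqball, hqinv⟩ :=
    exists_scales S hS F hF (ε/8) (by linarith) n k
  refine ⟨L, ε/8, k, fun i : Fin k => q i, by linarith, ?_, fun i => hqn i,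
    fun i => hqball i i.isLt, ?_⟩
  · intro a b hab
    exact hqmono hab
  intro Y hYne hYw
  set C₀ := winter S L Y with hC₀def
  have hC₀Y : C₀ ⊆ Y := Finset.filter_subset _ _
  have hδ : ((Y \ C₀).card : ℝ) ≤ ε/8 * (Y.card : ℝ) := by
    have hcs : (Y \ C₀).card = Y.card - C₀.card := Finset.card_sdiff_of_subset hC₀Y
    have hle : C₀.card ≤ Y.card := Finset.card_le_card hC₀Y
    rw [hcs, Nat.cast_sub hle]
    linarith [hYw]
  set T : Fin k → Finset G := fun i => F (q i) with hTdef
  have hT1 : ∀ i : Fin k, (1:G) ∈ T i := fun i => hF.2.1 (Nat.zero_le _) hF.1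
  have hC₀tiles : ∀ c ∈ C₀, ∀ i, T i * {c} ⊆ Y := by
    intro c hc i
    have hmem := Finset.mem_filter.1 hc
    exact (Finset.mul_subset_mul_right (hqball i i.isLt)).trans hmem.2
  have hinv : ∀ i j : Fin k, (i:ℕ) < (j:ℕ) →
      ((((T i)⁻¹ * T j) \ T j).card : ℝ) ≤ ε/8 * ((T j).card : ℝ) :=
    fun i j h => hqinv i j h
  obtain ⟨P', Ab', _, hA1, hA2, hA3, hA5, hrem⟩ :=
    multi ε hε0 hε2 k T hT1 Y C₀ hC₀Y hC₀tiles hinv hδ k (le_refl k) ∅ (fun _ => ∅)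
      (by simp) (by simp) (by simp) (by simp) (by simp)
  have hUY : P'.biUnion (fun p => T p.1 * {p.2}) ⊆ Y := by
    intro x hx
    obtain ⟨p, hp, hxp⟩ := Finset.mem_biUnion.1 hx
    exact hC₀tiles p.2 (hA5 p hp) p.1 hxp
  have hYpos : (0:ℝ) ≤ (Y.card : ℝ) := Nat.cast_nonneg _
  have hrem' : ((Y \ P'.biUnion (fun p => T p.1 * {p.2})).card : ℝ) ≤ ε * (Y.card : ℝ) := by
    refine hrem.trans (max_le (le_refl _) ?_)
    rw [Finset.biUnion_empty, Finset.sdiff_empty]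
    exact mul_le_mul_of_nonneg_right (le_of_lt hk) hYpos
  set e : Fin P'.card → Fin k × G := fun j => ((P'.equivFin.symm j) : Fin k × G) with hedef
  have he_mem : ∀ j, e j ∈ P' := fun j => (P'.equivFin.symm j).2
  have he_inj : Function.Injective e :=
    fun a b hab => P'.equivFin.symm.injective (Subtype.ext hab)
  have he_surj : ∀ p ∈ P', ∃ j, e j = p := by
    intro p hp
    refine ⟨P'.equivFin ⟨p, hp⟩, ?_⟩
    rw [hedef]
    dsimp only
    rw [Equiv.symm_apply_apply]
  refine ⟨P'.card, fun j => (e j).1, fun j => (e j).2,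
    fun j => hA5 (e j) (he_mem j), ?_, ?_, ?_⟩
  · intro j
    rw [rtrans_eq]
    exact hC₀tiles _ (hA5 _ (he_mem j)) _
  · refine ⟨fun j => Ab' (e j), fun j _ => ?_, fun j _ => ?_, fun j _ j' _ hne => ?_⟩
    · dsimp only
      rw [rtrans_eq]
      exact hA1 (e j) (he_mem j)
    · dsimp only
      rw [rtrans_eq]
      exact hA2 (e j) (he_mem j)
    · exact hA3 (e j) (he_mem j) (e j') (he_mem j') (fun h => hne (he_inj h))
  · have hbi : (Finset.univ : Finset (Fin P'.card)).biUnion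
        (fun j => rtrans (F (q ((e j).1))) ((e j).2)) =
        P'.biUnion (fun p => T p.1 * {p.2}) := by
      apply Finset.Subset.antisymm
      · intro x hx
        obtain ⟨j, _, hxj⟩ := Finset.mem_biUnion.1 hx
        rw [rtrans_eq] at hxj
        exact Finset.mem_biUnion.2 ⟨e j, he_mem j, hxj⟩
      · intro x hx
        obtain ⟨p, hp, hxp⟩ := Finset.mem_biUnion.1 hx
        obtain ⟨j, rfl⟩ := he_surj p hp
        refine Finset.mem_biUnion.2 ⟨j, Finset.mem_univ j, ?_⟩
        rw [rtrans_eq]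
        exact hxp
    unfold CoversFrac
    rw [hbi, Finset.inter_eq_right.2 hUY]
    have hcs : (Y \ P'.biUnion (fun p => T p.1 * {p.2})).card =
        Y.card - (P'.biUnion (fun p => T p.1 * {p.2})).card := Finset.card_sdiff_of_subset hUY
    have hle : (P'.biUnion (fun p => T p.1 * {p.2})).card ≤ Y.card :=
      Finset.card_le_card hUY
    rw [hcs, Nat.cast_sub hle] at hrem'
    linarith

end QTMain

theorem quasi_tiling {G : Type*} [Group G] (S : Finset G) (hS : IsSymmGen S)
    (F : ℕ → Finset G) (hF : IsFolnerExhaustion S F)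
    (ε : ℝ) (hε0 : 0 < ε) (hε1 : ε < 1) (n : ℕ) :
    ∃ (L : ℕ) (δ : ℝ) (s : ℕ) (nidx : Fin s → ℕ), 0 < δ ∧ StrictMono nidx ∧
      (∀ i, n < nidx i) ∧ (∀ i, F (nidx i) ⊆ wball S L) ∧
      ∀ Y : Finset G, Y.Nonempty → ((1 - δ) * (Y.card : ℝ) < ((winter S L Y).card : ℝ)) →
        ∃ (m : ℕ) (t : Fin m → Fin s) (ctr : Fin m → G),
          (∀ j, ctr j ∈ winter S L Y) ∧
          (∀ j, rtrans (F (nidx (t j))) (ctr j) ⊆ Y) ∧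
          EpsDisjoint (Finset.univ : Finset (Fin m))
            (fun j => rtrans (F (nidx (t j))) (ctr j)) ε ∧
          CoversFrac (Finset.univ : Finset (Fin m))
            (fun j => rtrans (F (nidx (t j))) (ctr j)) Y (1 - ε) := by
  obtain ⟨L, δ, s, nidx, hδ0, hmono, hn, hball, hmain⟩ :=
    quasi_tiling_half S hS F hF (min ε (1/2)) (lt_min hε0 (by norm_num))
      (min_le_right _ _) n
  have hle : min ε (1/2) ≤ ε := min_le_left _ _
  refine ⟨L, δ, s, nidx, hδ0, hmono, hn, hball, ?_⟩
  intro Y hYne hYw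
  obtain ⟨m, t, ctr, hc1, hc2, hc3, hc4⟩ := hmain Y hYne hYw
  refine ⟨m, t, ctr, hc1, hc2, ?_, ?_⟩
  · obtain ⟨Ab, h1, h2, h3⟩ := hc3
    refine ⟨Ab, h1, fun i hi => le_trans ?_ (h2 i hi), h3⟩
    exact mul_le_mul_of_nonneg_right (by linarith) (Nat.cast_nonneg _)
  · unfold CoversFrac at hc4 ⊢
    refine le_trans ?_ hc4
    exact mul_le_mul_of_nonneg_right (by linarith) (Nat.cast_nonneg _)
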